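/- arXiv:2308.10084 — 3 statements merged into one kernel-verified Lean document; each statement's English description precedes it below -/
import Mathlib

section
/- For all real numbers x and y with 1 ≤ y ≤ x, one has -N(x)/x = Σ_{k ≤ y} (Λ(k)/k)·(M(x/k)/(x/k)) + Σ_{j ≤ x/y} (μ(j)/j)·((ψ(x/j) - x/j)/(x/j)) - ((ψ(y)-y)/y)·(M(x/y)/(x/y)) + m₁(x/y). -/
open Finset Real ArithmeticFunction
open scoped ArithmeticFunction.Moebius

noncomputable def M (x : ℝ) : ℝ := ∑ n ∈ Finset.Icc 1 ⌊x⌋₊, (μ n : ℝ)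

noncomputable def N (x : ℝ) : ℝ := ∑ n ∈ Finset.Icc 1 ⌊x⌋₊, (μ n : ℝ) * Real.log n

noncomputable def ψ (x : ℝ) : ℝ := ∑ n ∈ Finset.Icc 1 ⌊x⌋₊, Λ n

noncomputable def m (x : ℝ) : ℝ := ∑ n ∈ Finset.Icc 1 ⌊x⌋₊, (μ n : ℝ) / n

noncomputable def m₁ (x : ℝ) : ℝ := m x - M x / x

noncomputable def A (t : ℝ) : ℝ :=
  (⌊t⌋ : ℝ) - (⌊t/2⌋ : ℝ) - (⌊t/3⌋ : ℝ) - (⌊t/5⌋ : ℝ) + (⌊t/30⌋ : ℝ)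

open scoped ArithmeticFunction.zeta

lemma key (n : ℕ) : (μ n : ℝ) * Real.log n = -∑ p ∈ n.divisorsAntidiagonal, Λ p.1 * (μ p.2 : ℝ) := by
  have h : (pmul (μ : ArithmeticFunction ℝ) log) * ζ = -Λ := by
    ext m
    rw [coe_mul_zeta_apply]
    simpa [pmul_apply, log_apply, intCoe_apply] using (sum_moebius_mul_log_eq (n := m))
  have h2 : (pmul (μ : ArithmeticFunction ℝ) log) = -Λ * μ := by
    rw [← h, mul_assoc, coe_zeta_mul_coe_moebius, mul_one]
  have h3 := congrArg (fun f => f n) h2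
  simp only [pmul_apply, log_apply, mul_apply, intCoe_apply] at h3
  rw [h3, ← Finset.sum_neg_distrib]
  exact Finset.sum_congr rfl fun p _ => by show -Λ p.1 * (μ p.2 : ℝ) = _; ring

lemma floor_div_iff {x : ℝ} (hx : 0 ≤ x) {k j : ℕ} (hk : 0 < k) :
    j ≤ ⌊x / k⌋₊ ↔ k * j ≤ ⌊x⌋₊ := by
  have hk' : (0:ℝ) < k := by positivity
  rw [Nat.le_floor_iff (by positivity), Nat.le_floor_iff hx, le_div_iff₀ hk', Nat.cast_mul,
    mul_comm]

lemma innerSum (g : ℕ → ℝ) {x : ℝ} (hx : 0 ≤ x) {k : ℕ} (hk : 0 < k) :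
    ∑ j ∈ Icc 1 ⌊x / k⌋₊, g j =
      ∑ j ∈ Icc 1 ⌊x⌋₊, if k * j ≤ ⌊x⌋₊ then g j else 0 := by
  rw [← Finset.sum_filter]
  apply Finset.sum_congr _ (fun _ _ => rfl)
  ext j
  simp only [mem_filter, mem_Icc, floor_div_iff hx hk]
  constructor
  · rintro ⟨h1, h2⟩
    exact ⟨⟨h1, le_trans (Nat.le_mul_of_pos_left j hk) h2⟩, h2⟩
  · rintro ⟨⟨h1, _⟩, h3⟩
    exact ⟨h1, h3⟩

lemma biUnion_eq (F : ℕ × ℕ → ℝ) (X : ℕ) :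
    ∑ n ∈ Icc 1 X, ∑ p ∈ n.divisorsAntidiagonal, F p =
      ∑ k ∈ Icc 1 X, ∑ j ∈ Icc 1 X, if k * j ≤ X then F (k, j) else 0 := by
  have hdis : (↑(Icc 1 X : Finset ℕ) : Set ℕ).PairwiseDisjoint Nat.divisorsAntidiagonal := by
    intro a _ b _ hab
    simp only [Finset.disjoint_left]
    intro p hpa hpb
    rw [Nat.mem_divisorsAntidiagonal] at hpa hpb
    exact hab (hpa.1.symm.trans hpb.1)
  rw [← Finset.sum_biUnion hdis]
  have : ∀ k ∈ Icc 1 X, (∑ j ∈ Icc 1 X, if k * j ≤ X then F (k, j) else 0)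
      = ∑ j ∈ Icc 1 X, if (k, j).1 * (k, j).2 ≤ X then F (k, j) else 0 := fun _ _ => rfl
  rw [Finset.sum_congr rfl this, ← Finset.sum_product', ← Finset.sum_filter]
  apply Finset.sum_congr _ (fun _ _ => rfl)
  ext p
  simp only [Finset.mem_biUnion, mem_filter, mem_product, mem_Icc, Nat.mem_divisorsAntidiagonal]
  constructor
  · rintro ⟨n, ⟨hn1, hn2⟩, hpn, hn0⟩
    have hp1 : 0 < p.1 := Nat.pos_of_mul_pos_left (a := p.2) (by rw [mul_comm, hpn]; omega)
    have hp2 : 0 < p.2 := Nat.pos_of_mul_pos_left (a := p.1) (by rw [hpn]; omega)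
    refine ⟨⟨⟨hp1, ?_⟩, hp2, ?_⟩, by omega⟩
    · calc p.1 ≤ p.1 * p.2 := Nat.le_mul_of_pos_right _ hp2
        _ ≤ X := by omega
    · calc p.2 ≤ p.1 * p.2 := Nat.le_mul_of_pos_left _ hp1
        _ ≤ X := by omega
  · rintro ⟨⟨⟨h11, h12⟩, h21, h22⟩, hle⟩
    exact ⟨p.1 * p.2, ⟨by exact Nat.one_le_iff_ne_zero.mpr (by positivity), hle⟩, rfl,
      by positivity⟩

lemma hyperbola (f g : ℕ → ℝ) (x y : ℝ) (hy : 1 ≤ y) (hyx : y ≤ x) :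
    (∑ k ∈ Icc 1 ⌊y⌋₊, f k * ∑ j ∈ Icc 1 ⌊x / (k:ℝ)⌋₊, g j)
      + (∑ j ∈ Icc 1 ⌊x / y⌋₊, (∑ k ∈ Icc 1 ⌊x / (j:ℝ)⌋₊, f k) * g j)
      - (∑ k ∈ Icc 1 ⌊y⌋₊, f k) * (∑ j ∈ Icc 1 ⌊x / y⌋₊, g j)
    = ∑ n ∈ Icc 1 ⌊x⌋₊, ∑ p ∈ n.divisorsAntidiagonal, f p.1 * g p.2 := by
  have hx0 : (0:ℝ) < x := lt_of_lt_of_le one_pos (hy.trans hyx)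
  have hy0 : (0:ℝ) < y := lt_of_lt_of_le one_pos hy
  set X := ⌊x⌋₊ with hX
  set Y := ⌊y⌋₊ with hYdef
  set Z := ⌊x / y⌋₊ with hZdef
  have hYX : Y ≤ X := Nat.floor_le_floor hyx
  have hxy_le : x / y ≤ x := by
    rw [div_le_iff₀ hy0]; nlinarith
  have hZX : Z ≤ X := Nat.floor_le_floor hxy_le
  have h1 : ∀ k j : ℕ, k ≤ Y → j ≤ Z → k * j ≤ X := by
    intro k j hk hj
    apply Nat.le_floor
    have hk' : (k:ℝ) ≤ y := by
      calc (k:ℝ) ≤ (Y:ℝ) := by exact_mod_cast hk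
        _ ≤ y := Nat.floor_le hy0.le
    have hj' : (j:ℝ) ≤ x / y := by
      calc (j:ℝ) ≤ (Z:ℝ) := by exact_mod_cast hj
        _ ≤ x / y := Nat.floor_le (by positivity)
    push_cast
    calc (k:ℝ) * j ≤ y * (x / y) := by
          apply mul_le_mul hk' hj' (by positivity) hy0.le
      _ = x := by field_simp
  have h2 : ∀ k j : ℕ, k * j ≤ X → k ≤ Y ∨ j ≤ Z := by
    intro k j hkj
    by_contra hcon
    push_neg at hcon
    obtain ⟨hk, hj⟩ := hcon
    have hk' : y < (k:ℝ) := by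
      calc y < (Y:ℝ) + 1 := Nat.lt_floor_add_one y
        _ ≤ (k:ℝ) := by exact_mod_cast hk
    have hj' : x / y < (j:ℝ) := by
      calc x / y < (Z:ℝ) + 1 := Nat.lt_floor_add_one _
        _ ≤ (j:ℝ) := by exact_mod_cast hj
    have : x < (k:ℝ) * j := by
      have hxy0 : (0:ℝ) < x / y := div_pos hx0 hy0
      have hxx : y * (x / y) = x := by field_simp
      nlinarith [mul_pos (sub_pos.2 hk') (sub_pos.2 hj'),
        mul_pos (sub_pos.2 hk') hxy0, mul_pos hy0 (sub_pos.2 hj')]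
    have h3 : ((k*j : ℕ):ℝ) ≤ x := by
      exact_mod_cast (Nat.floor_le hx0.le).trans' (by exact_mod_cast Nat.cast_le.mpr hkj)
    push_cast at h3
    linarith
  have hIccY : Icc 1 Y = (Icc 1 X).filter (fun k => k ≤ Y) := by
    ext k; simp only [mem_Icc, mem_filter]; omega
  have hIccZ : Icc 1 Z = (Icc 1 X).filter (fun j => j ≤ Z) := by
    ext j; simp only [mem_Icc, mem_filter]; omega
  have eA : (∑ k ∈ Icc 1 Y, f k * ∑ j ∈ Icc 1 ⌊x / (k:ℝ)⌋₊, g j)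
      = ∑ k ∈ Icc 1 X, ∑ j ∈ Icc 1 X, if k ≤ Y ∧ k * j ≤ X then f k * g j else 0 := by
    rw [hIccY, Finset.sum_filter]
    apply Finset.sum_congr rfl
    intro k hk
    rw [mem_Icc] at hk
    split_ifs with hkY
    · rw [innerSum g hx0.le (by omega), Finset.mul_sum]
      exact Finset.sum_congr rfl fun j _ => by rw [mul_ite, mul_zero]; simp [hkY, hX]
    · simp [hkY]
  have eB : (∑ j ∈ Icc 1 Z, (∑ k ∈ Icc 1 ⌊x / (j:ℝ)⌋₊, f k) * g j)
      = ∑ k ∈ Icc 1 X, ∑ j ∈ Icc 1 X, if j ≤ Z ∧ k * j ≤ X then f k * g j else 0 := by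
    rw [Finset.sum_comm, hIccZ, Finset.sum_filter]
    apply Finset.sum_congr rfl
    intro j hj
    rw [mem_Icc] at hj
    split_ifs with hjZ
    · rw [innerSum f hx0.le (by omega), Finset.sum_mul]
      refine Finset.sum_congr rfl fun k _ => by
        rw [ite_mul, zero_mul]
        simp only [hjZ, true_and]
        rw [mul_comm j k]
    · simp [hjZ]
  have eC : (∑ k ∈ Icc 1 Y, f k) * (∑ j ∈ Icc 1 Z, g j)
      = ∑ k ∈ Icc 1 X, ∑ j ∈ Icc 1 X, if k ≤ Y ∧ j ≤ Z then f k * g j else 0 := by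
    rw [Finset.sum_mul_sum, hIccY, hIccZ, Finset.sum_filter]
    apply Finset.sum_congr rfl
    intro k _
    rw [Finset.sum_filter]
    split_ifs with hkY
    · exact Finset.sum_congr rfl fun j _ => by by_cases hjZ : j ≤ Z <;> simp [hkY, hjZ]
    · simp [hkY]
  rw [eA, eB, eC, biUnion_eq (fun p => f p.1 * g p.2) X]
  rw [← Finset.sum_add_distrib, ← Finset.sum_sub_distrib]
  apply Finset.sum_congr rfl
  intro k _
  rw [← Finset.sum_add_distrib, ← Finset.sum_sub_distrib]
  apply Finset.sum_congr rfl
  intro j _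
  have hh1 := h1 k j
  have hh2 := h2 k j
  by_cases c1 : k ≤ Y <;> by_cases c2 : j ≤ Z <;> by_cases c3 : k * j ≤ X
  all_goals first
    | exact absurd (hh1 c1 c2) c3
    | exact absurd ((hh2 c3).resolve_left c1) c2
    | (simp only [c1, c2, c3, and_true, and_false, true_and, false_and, if_true, if_false]; ring)

lemma N_eq (x : ℝ) : -N x =
    ∑ n ∈ Icc 1 ⌊x⌋₊, ∑ p ∈ n.divisorsAntidiagonal, Λ p.1 * (μ p.2 : ℝ) := by
  unfold N
  rw [← Finset.sum_neg_distrib]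
  exact Finset.sum_congr rfl fun n _ => by rw [key n]; ring

theorem stmt0 (x y : ℝ) (hy : 1 ≤ y) (hyx : y ≤ x) :
    -N x / x =
      (∑ k ∈ Finset.Icc 1 ⌊y⌋₊, (Λ k / k) * (M (x / k) / (x / k)))
      + (∑ j ∈ Finset.Icc 1 ⌊x / y⌋₊, ((μ j : ℝ) / j) * ((ψ (x / j) - x / j) / (x / j)))
      - ((ψ y - y) / y) * (M (x / y) / (x / y))
      + m₁ (x / y) := by
  have hx0 : (0:ℝ) < x := lt_of_lt_of_le one_pos (hy.trans hyx)
  have hy0 : (0:ℝ) < y := lt_of_lt_of_le one_pos hy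
  have hx0' : x ≠ 0 := hx0.ne'
  have hy0' : y ≠ 0 := hy0.ne'
  have hNx : -N x = (∑ k ∈ Icc 1 ⌊y⌋₊, Λ k * M (x / k))
      + (∑ j ∈ Icc 1 ⌊x / y⌋₊, (μ j : ℝ) * ψ (x / j)) - ψ y * M (x / y) := by
    rw [N_eq x, ← hyperbola Λ (fun n => (μ n : ℝ)) x y hy hyx]
    unfold M ψ
    congr 1
    congr 1
    exact Finset.sum_congr rfl fun j _ => mul_comm _ _
  have e1 : (∑ k ∈ Icc 1 ⌊y⌋₊, (Λ k / k) * (M (x / k) / (x / k)))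
      = (∑ k ∈ Icc 1 ⌊y⌋₊, Λ k * M (x / k)) / x := by
    rw [Finset.sum_div]
    refine Finset.sum_congr rfl fun k hk => ?_
    rw [mem_Icc] at hk
    have hk0 : (k:ℝ) ≠ 0 := Nat.cast_ne_zero.mpr (by omega)
    field_simp
  have e2 : (∑ j ∈ Icc 1 ⌊x / y⌋₊, ((μ j : ℝ) / j) * ((ψ (x / j) - x / j) / (x / j)))
      = (∑ j ∈ Icc 1 ⌊x / y⌋₊, (μ j : ℝ) * ψ (x / j)) / x - m (x / y) := by
    unfold m
    rw [Finset.sum_div, ← Finset.sum_sub_distrib]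
    refine Finset.sum_congr rfl fun j hj => ?_
    rw [mem_Icc] at hj
    have hj0 : (j:ℝ) ≠ 0 := Nat.cast_ne_zero.mpr (by omega)
    field_simp
  have e3 : ((ψ y - y) / y) * (M (x / y) / (x / y))
      = ψ y * M (x / y) / x - M (x / y) / (x / y) := by
    field_simp
  rw [e1, e2, e3, hNx]
  unfold m₁
  ring
end

section
/- One has ∫_1^∞ (1 - A(t))·t^{-2} dt = 1 - (log 2)/2 - (log 3)/3 - (log 5)/5 + (log 30)/30, where A(t) = ⌊t⌋ - ⌊t/2⌋ - ⌊t/3⌋ - ⌊t/5⌋ + ⌊t/30⌋; this value is approximately 0.07870 and in particular is less than 0.08. -/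
open Finset Real ArithmeticFunction
open scoped ArithmeticFunction.Moebius

open MeasureTheory Filter Topology Set

namespace Stmt9Aux

lemma abs_bound (t : ℝ) : |1 - A t| ≤ 3 := by
  rw [abs_le]
  unfold A
  rw [← Int.self_sub_fract t, ← Int.self_sub_fract (t/2), ← Int.self_sub_fract (t/3),
    ← Int.self_sub_fract (t/5), ← Int.self_sub_fract (t/30)]
  constructor <;>
  nlinarith [Int.fract_nonneg t, Int.fract_lt_one t, Int.fract_nonneg (t/2), Int.fract_lt_one (t/2),
    Int.fract_nonneg (t/3), Int.fract_lt_one (t/3), Int.fract_nonneg (t/5), Int.fract_lt_one (t/5),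
    Int.fract_nonneg (t/30), Int.fract_lt_one (t/30)]

noncomputable def aa (n : ℕ) : ℝ := (n:ℝ) - (n/2 : ℕ) - (n/3 : ℕ) - (n/5 : ℕ) + (n/30 : ℕ)

lemma A_nat (t : ℝ) (ht : 0 ≤ t) : A t = aa ⌊t⌋₊ := by
  have h2 : (0:ℝ) ≤ t/2 := by positivity
  have h3 : (0:ℝ) ≤ t/3 := by positivity
  have h5 : (0:ℝ) ≤ t/5 := by positivity
  have h30 : (0:ℝ) ≤ t/30 := by positivity
  unfold A aa
  rw [← natCast_floor_eq_intCast_floor ht, ← natCast_floor_eq_intCast_floor h2,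
    ← natCast_floor_eq_intCast_floor h3, ← natCast_floor_eq_intCast_floor h5,
    ← natCast_floor_eq_intCast_floor h30, Nat.floor_div_ofNat, Nat.floor_div_ofNat,
    Nat.floor_div_ofNat, Nat.floor_div_ofNat]

lemma A_meas : Measurable A := by
  unfold A
  have hc : Measurable fun z : ℤ => (z : ℝ) := measurable_from_top
  have h : ∀ c : ℝ, Measurable fun t : ℝ => ((⌊t/c⌋ : ℤ) : ℝ) :=
    fun c => hc.comp ((measurable_id.div_const c).floor)
  exact (((hc.comp measurable_id.floor).sub (h 2)).sub (h 3)).sub (h 5) |>.add (h 30)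

lemma f_int : IntegrableOn (fun t => (1 - A t) * t ^ (-(2:ℝ))) (Set.Ioi 1) volume := by
  have hc : ContinuousOn (fun t : ℝ => t ^ (-(2:ℝ))) (Set.Ioi 1) := fun t ht =>
    (Real.continuousAt_rpow_const t _ (Or.inl (ne_of_gt (zero_lt_one.trans ht)))).continuousWithinAt
  have hm : AEStronglyMeasurable (fun t : ℝ => (1 - A t) * t ^ (-(2:ℝ)))
      (volume.restrict (Set.Ioi 1)) :=
    ((measurable_const.sub A_meas).aestronglyMeasurable).mul
      (hc.aestronglyMeasurable measurableSet_Ioi)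
  apply Integrable.mono'
    ((integrableOn_Ioi_rpow_of_lt (show (-2:ℝ) < -1 by norm_num) one_pos).const_mul 3) hm
  rw [ae_restrict_iff' measurableSet_Ioi]
  filter_upwards with t ht
  have ht0 : (0:ℝ) < t := lt_trans one_pos ht
  have h2 : (0:ℝ) ≤ t ^ (-(2:ℝ)) := Real.rpow_nonneg ht0.le _
  rw [norm_mul, Real.norm_eq_abs, Real.norm_eq_abs, abs_of_nonneg h2]
  exact mul_le_mul_of_nonneg_right (abs_bound t) h2

lemma f_ii {a b : ℝ} (ha : 1 ≤ a) (hab : a ≤ b) :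
    IntervalIntegrable (fun t => (1 - A t) * t ^ (-(2:ℝ))) volume a b := by
  rw [intervalIntegrable_iff, uIoc_of_le hab]
  exact f_int.mono_set (fun x hx => lt_of_le_of_lt ha hx.1)

lemma step_integral (n : ℕ) (hn : 1 ≤ n) :
    ∫ t in (n:ℝ)..((n:ℝ)+1), (1 - A t) * t ^ (-(2:ℝ))
      = (1 - aa n) * (1/(n:ℝ) - 1/((n:ℝ)+1)) := by
  have hn' : (1:ℝ) ≤ (n:ℝ) := by exact_mod_cast hn
  have hcongr : ∫ t in (n:ℝ)..((n:ℝ)+1), (1 - A t) * t ^ (-(2:ℝ))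
      = ∫ t in (n:ℝ)..((n:ℝ)+1), (1 - aa n) * t ^ (-(2:ℝ)) := by
    apply intervalIntegral.integral_congr_ae
    have hne : ∀ᵐ x : ℝ, x ≠ (n:ℝ) + 1 := by
      refine (MeasureTheory.measure_eq_zero_iff_ae_notMem.mp
        (MeasureTheory.measure_singleton ((n:ℝ)+1))).mono ?_
      intro x hx
      simpa [Set.mem_singleton_iff] using hx
    filter_upwards [hne] with x hx hmem
    rw [Set.uIoc_of_le (by linarith : (n:ℝ) ≤ (n:ℝ)+1)] at hmem
    have hx0 : (0:ℝ) ≤ x := by linarith [hmem.1]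
    have hfl : ⌊x⌋₊ = n := by
      rw [Nat.floor_eq_iff hx0]
      exact ⟨hmem.1.le, lt_of_le_of_ne hmem.2 hx⟩
    rw [A_nat x hx0, hfl]
  rw [hcongr, intervalIntegral.integral_const_mul,
    integral_rpow (Or.inr ⟨by norm_num, by
      simp only [Set.mem_uIcc]; push_neg
      constructor <;> intro h <;> [skip; linarith] <;> linarith⟩)]
  have e1 : (-(2:ℝ)+1) = -1 := by norm_num
  rw [e1, Real.rpow_neg_one, Real.rpow_neg_one, one_div, one_div]
  ring

lemma integral_upto (m : ℕ) :
    ∫ t in (1:ℝ)..((m:ℝ)+1), (1 - A t) * t ^ (-(2:ℝ))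
      = ∑ n ∈ Finset.Icc 1 m, (1 - aa n) * (1/(n:ℝ) - 1/((n:ℝ)+1)) := by
  induction m with
  | zero => simp
  | succ m ih =>
    have hadj : ∫ t in (1:ℝ)..(((m:ℝ)+1)+1), (1 - A t) * t ^ (-(2:ℝ))
        = (∫ t in (1:ℝ)..((m:ℝ)+1), (1 - A t) * t ^ (-(2:ℝ)))
          + ∫ t in ((m:ℝ)+1)..(((m:ℝ)+1)+1), (1 - A t) * t ^ (-(2:ℝ)) :=
      (intervalIntegral.integral_add_adjacent_intervals
        (f_ii le_rfl (by linarith [Nat.cast_nonneg (α:=ℝ) m]))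
        (f_ii (by linarith [Nat.cast_nonneg (α:=ℝ) m]) (by linarith))).symm
    have hstep := step_integral (m+1) (by omega)
    push_cast at hstep
    rw [Finset.sum_Icc_succ_top (by omega : 1 ≤ m + 1)]
    push_cast
    rw [hadj, ih, hstep]

noncomputable def dd (n : ℕ) : ℝ :=
  1 - (if 2 ∣ n then (1:ℝ) else 0) - (if 3 ∣ n then (1:ℝ) else 0)
    - (if 5 ∣ n then (1:ℝ) else 0) + (if 30 ∣ n then (1:ℝ) else 0)

lemma aa_succ (n : ℕ) : aa (n+1) = aa n + dd (n+1) := by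
  unfold aa dd
  rw [Nat.succ_div, Nat.succ_div, Nat.succ_div, Nat.succ_div]
  push_cast [apply_ite (fun q : ℕ => (q:ℝ))]
  ring

lemma sum_A (M : ℕ) :
    ∑ n ∈ Finset.Icc 1 M, aa n * (1/(n:ℝ) - 1/((n:ℝ)+1))
      = (∑ n ∈ Finset.Icc 1 M, dd n / (n:ℝ)) - aa M / ((M:ℝ)+1) := by
  induction M with
  | zero => simp [aa]
  | succ M ih =>
    rw [Finset.sum_Icc_succ_top (by omega : 1 ≤ M + 1),
      Finset.sum_Icc_succ_top (by omega : 1 ≤ M + 1), ih, aa_succ]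
    have h1 : ((M:ℝ)+1) ≠ 0 := by positivity
    have h2 : ((M:ℝ)+1+1) ≠ 0 := by positivity
    push_cast
    field_simp
    ring

lemma telescope (M : ℕ) :
    ∑ n ∈ Finset.Icc 1 M, (1/(n:ℝ) - 1/((n:ℝ)+1)) = 1 - 1/((M:ℝ)+1) := by
  induction M with
  | zero => simp
  | succ M ih =>
    rw [Finset.sum_Icc_succ_top (by omega : 1 ≤ M + 1), ih]
    have h1 : ((M:ℝ)+1) ≠ 0 := by positivity
    have h2 : ((M:ℝ)+1+1) ≠ 0 := by positivity
    push_cast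
    field_simp
    ring

noncomputable def H (n : ℕ) : ℝ := ∑ i ∈ Finset.Icc 1 n, 1/(i:ℝ)

lemma H_harmonic (n : ℕ) : H n = ((harmonic n : ℚ) : ℝ) := by
  rw [harmonic_eq_sum_Icc, H]
  push_cast
  simp [one_div]

lemma sum_ind (k m : ℕ) (hk : 0 < k) :
    ∑ n ∈ Finset.Icc 1 (k*m), (if k ∣ n then (1:ℝ)/n else 0) = (1/(k:ℝ)) * H m := by
  rw [← Finset.sum_filter]
  have himg : (Finset.Icc 1 (k*m)).filter (fun n => k ∣ n)
      = (Finset.Icc 1 m).image (fun j => k * j) := by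
    ext n
    simp only [Finset.mem_filter, Finset.mem_image, Finset.mem_Icc]
    constructor
    · rintro ⟨⟨h1, h2⟩, j, rfl⟩
      exact ⟨j, ⟨Nat.pos_of_ne_zero (fun h => by subst h; simp at h1),
        Nat.le_of_mul_le_mul_left h2 hk⟩, rfl⟩
    · rintro ⟨j, ⟨hj1, hj2⟩, rfl⟩
      exact ⟨⟨Nat.mul_pos hk hj1, Nat.mul_le_mul_left k hj2⟩, j, rfl⟩
  rw [himg, Finset.sum_image (fun a _ b _ h => Nat.eq_of_mul_eq_mul_left hk h)]
  rw [H, Finset.mul_sum]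
  apply Finset.sum_congr rfl
  intro j hj
  rw [Finset.mem_Icc] at hj
  have : (j:ℝ) ≠ 0 := by exact_mod_cast Nat.one_le_iff_ne_zero.mp hj.1
  have : (k:ℝ) ≠ 0 := by exact_mod_cast hk.ne'
  push_cast
  field_simp

lemma aa_30 (N : ℕ) : aa (30*N) = 0 := by
  unfold aa
  have h2 : 30*N/2 = 15*N := by omega
  have h3 : 30*N/3 = 10*N := by omega
  have h5 : 30*N/5 = 6*N := by omega
  have h30 : 30*N/30 = N := by omega
  rw [h2, h3, h5, h30]
  push_cast
  ring

lemma S_eval (N : ℕ) :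
    ∑ n ∈ Finset.Icc 1 (30*N), dd n / (n:ℝ)
      = H (30*N) - (1/2) * H (15*N) - (1/3) * H (10*N) - (1/5) * H (6*N) + (1/30) * H N := by
  have expand : ∀ n : ℕ, dd n / (n:ℝ)
      = 1/(n:ℝ) - (if 2 ∣ n then (1:ℝ)/n else 0) - (if 3 ∣ n then (1:ℝ)/n else 0)
        - (if 5 ∣ n then (1:ℝ)/n else 0) + (if 30 ∣ n then (1:ℝ)/n else 0) := by
    intro n
    unfold dd
    by_cases h2 : 2 ∣ n <;> by_cases h3 : 3 ∣ n <;> by_cases h5 : 5 ∣ n <;>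
      by_cases h30 : 30 ∣ n <;> simp [h2, h3, h5, h30] <;> ring
  simp only [expand]
  rw [Finset.sum_add_distrib, Finset.sum_sub_distrib, Finset.sum_sub_distrib,
    Finset.sum_sub_distrib]
  have e2 : (30:ℕ)*N = 2*(15*N) := by ring
  have e3 : (30:ℕ)*N = 3*(10*N) := by ring
  have e5 : (30:ℕ)*N = 5*(6*N) := by ring
  rw [show (∑ n ∈ Finset.Icc 1 (30*N), (if 2 ∣ n then (1:ℝ)/n else 0))
      = (1/(2:ℝ)) * H (15*N) by rw [e2]; exact sum_ind 2 (15*N) (by norm_num)]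
  rw [show (∑ n ∈ Finset.Icc 1 (30*N), (if 3 ∣ n then (1:ℝ)/n else 0))
      = (1/(3:ℝ)) * H (10*N) by rw [e3]; exact sum_ind 3 (10*N) (by norm_num)]
  rw [show (∑ n ∈ Finset.Icc 1 (30*N), (if 5 ∣ n then (1:ℝ)/n else 0))
      = (1/(5:ℝ)) * H (6*N) by rw [e5]; exact sum_ind 5 (6*N) (by norm_num)]
  rw [show (∑ n ∈ Finset.Icc 1 (30*N), (if 30 ∣ n then (1:ℝ)/n else 0))
      = (1/(30:ℝ)) * H N by exact sum_ind 30 N (by norm_num)]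
  have hfin : (∑ n ∈ Finset.Icc 1 (30*N), (1:ℝ)/n) = H (30*N) := rfl
  rw [hfin]

lemma tendsto_H_sub_log : Tendsto (fun n : ℕ => H n - Real.log n) atTop
    (𝓝 Real.eulerMascheroniConstant) := by
  apply Real.tendsto_harmonic_sub_log.congr
  intro n
  rw [H_harmonic]

lemma tendsto_H_mul (k : ℕ) (hk : 0 < k) :
    Tendsto (fun N : ℕ => H (k*N) - Real.log ((k*N : ℕ) : ℝ)) atTop
      (𝓝 Real.eulerMascheroniConstant) := by
  apply tendsto_H_sub_log.comp
  exact tendsto_atTop_mono (fun n => Nat.le_mul_of_pos_left n hk) tendsto_id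

lemma tendsto_inv30 : Tendsto (fun N : ℕ => 1/(30*(N:ℝ)+1)) atTop (𝓝 0) := by
  simp only [one_div]
  apply Tendsto.inv_tendsto_atTop
  apply tendsto_atTop_add_const_right
  exact Tendsto.const_mul_atTop (by norm_num) tendsto_natCast_atTop_atTop

noncomputable def sN (N : ℕ) : ℝ :=
  H (30*N) - (1/2) * H (15*N) - (1/3) * H (10*N) - (1/5) * H (6*N) + (1/30) * H N

noncomputable def EE (N : ℕ) : ℝ :=
  (H (30*N) - Real.log ((30*N : ℕ) : ℝ)) - (1/2) * (H (15*N) - Real.log ((15*N : ℕ) : ℝ))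
    - (1/3) * (H (10*N) - Real.log ((10*N : ℕ) : ℝ))
    - (1/5) * (H (6*N) - Real.log ((6*N : ℕ) : ℝ))
    + (1/30) * (H N - Real.log (N : ℝ))

lemma sN_eq (N : ℕ) (hN : 1 ≤ N) :
    sN N = EE N + (Real.log 30 - (1/2) * Real.log 15 - (1/3) * Real.log 10
      - (1/5) * Real.log 6) := by
  have hN0 : (N:ℝ) ≠ 0 := by positivity
  unfold sN EE
  push_cast
  rw [Real.log_mul (by norm_num) hN0, Real.log_mul (by norm_num) hN0,
    Real.log_mul (by norm_num) hN0, Real.log_mul (by norm_num) hN0]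
  ring

lemma main_tendsto :
    Tendsto (fun N : ℕ => ∑ n ∈ Finset.Icc 1 (30*N), (1 - aa n) * (1/(n:ℝ) - 1/((n:ℝ)+1)))
      atTop (𝓝 (1 - Real.log 2 / 2 - Real.log 3 / 3 - Real.log 5 / 5 + Real.log 30 / 30)) := by
  have hg : ∀ N : ℕ, ∑ n ∈ Finset.Icc 1 (30*N), (1 - aa n) * (1/(n:ℝ) - 1/((n:ℝ)+1))
      = 1 - 1/(30*(N:ℝ)+1) - sN N := by
    intro N
    have hexp : ∀ n : ℕ, (1 - aa n) * (1/(n:ℝ) - 1/((n:ℝ)+1))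
        = (1/(n:ℝ) - 1/((n:ℝ)+1)) - aa n * (1/(n:ℝ) - 1/((n:ℝ)+1)) := by
      intro n; ring
    simp only [hexp]
    rw [Finset.sum_sub_distrib, telescope (30*N), sum_A (30*N), S_eval N, aa_30]
    unfold sN
    push_cast
    ring
  have hEE : Tendsto EE atTop (𝓝 (Real.eulerMascheroniConstant
      - (1/2) * Real.eulerMascheroniConstant - (1/3) * Real.eulerMascheroniConstant
      - (1/5) * Real.eulerMascheroniConstant + (1/30) * Real.eulerMascheroniConstant)) := by
    unfold EE
    exact ((((tendsto_H_mul 30 (by norm_num)).sub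
      ((tendsto_H_mul 15 (by norm_num)).const_mul (1/2))).sub
      ((tendsto_H_mul 10 (by norm_num)).const_mul (1/3))).sub
      ((tendsto_H_mul 6 (by norm_num)).const_mul (1/5))).add
      (tendsto_H_sub_log.const_mul (1/30))
  have h0 : Tendsto (fun N : ℕ => 1 - 1/(30*(N:ℝ)+1) - (EE N + (Real.log 30
      - (1/2) * Real.log 15 - (1/3) * Real.log 10 - (1/5) * Real.log 6))) atTop
      (𝓝 (1 - 0 - ((Real.eulerMascheroniConstant - (1/2) * Real.eulerMascheroniConstant
        - (1/3) * Real.eulerMascheroniConstant - (1/5) * Real.eulerMascheroniConstant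
        + (1/30) * Real.eulerMascheroniConstant) + (Real.log 30 - (1/2) * Real.log 15
        - (1/3) * Real.log 10 - (1/5) * Real.log 6)))) :=
    (tendsto_const_nhds.sub tendsto_inv30).sub (hEE.add tendsto_const_nhds)
  have hval : (1:ℝ) - 0 - ((Real.eulerMascheroniConstant - (1/2) * Real.eulerMascheroniConstant
        - (1/3) * Real.eulerMascheroniConstant - (1/5) * Real.eulerMascheroniConstant
        + (1/30) * Real.eulerMascheroniConstant) + (Real.log 30 - (1/2) * Real.log 15
        - (1/3) * Real.log 10 - (1/5) * Real.log 6))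
      = 1 - Real.log 2 / 2 - Real.log 3 / 3 - Real.log 5 / 5 + Real.log 30 / 30 := by
    have l30 : Real.log 30 = Real.log 2 + Real.log 3 + Real.log 5 := by
      rw [show (30:ℝ) = 2*3*5 by norm_num, Real.log_mul (by norm_num) (by norm_num),
        Real.log_mul (by norm_num) (by norm_num)]
    have l15 : Real.log 15 = Real.log 3 + Real.log 5 := by
      rw [show (15:ℝ) = 3*5 by norm_num, Real.log_mul (by norm_num) (by norm_num)]
    have l10 : Real.log 10 = Real.log 2 + Real.log 5 := by
      rw [show (10:ℝ) = 2*5 by norm_num, Real.log_mul (by norm_num) (by norm_num)]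
    have l6 : Real.log 6 = Real.log 2 + Real.log 3 := by
      rw [show (6:ℝ) = 2*3 by norm_num, Real.log_mul (by norm_num) (by norm_num)]
    rw [l30, l15, l10, l6]
    ring
  rw [hval] at h0
  apply h0.congr'
  filter_upwards [eventually_ge_atTop 1] with N hN
  rw [hg N, sN_eq N hN]

end Stmt9Aux

theorem stmt9 :
    (∫ t in Set.Ioi (1:ℝ), (1 - A t) * t ^ (-(2:ℝ)) : ℝ)
      = 1 - Real.log 2 / 2 - Real.log 3 / 3 - Real.log 5 / 5 + Real.log 30 / 30
    ∧ (∫ t in Set.Ioi (1:ℝ), (1 - A t) * t ^ (-(2:ℝ)) : ℝ) < 0.08 := by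
  open Stmt9Aux in
  have heq : (∫ t in Set.Ioi (1:ℝ), (1 - A t) * t ^ (-(2:ℝ)) : ℝ)
      = 1 - Real.log 2 / 2 - Real.log 3 / 3 - Real.log 5 / 5 + Real.log 30 / 30 := by
    have hb : Tendsto (fun N : ℕ => 30*(N:ℝ)+1) atTop atTop := by
      apply tendsto_atTop_add_const_right
      exact Tendsto.const_mul_atTop (by norm_num) tendsto_natCast_atTop_atTop
    have h1 : Tendsto (fun N : ℕ => ∫ t in (1:ℝ)..(30*(N:ℝ)+1), (1 - A t) * t ^ (-(2:ℝ)))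
        atTop (𝓝 (∫ t in Set.Ioi (1:ℝ), (1 - A t) * t ^ (-(2:ℝ)))) :=
      intervalIntegral_tendsto_integral_Ioi 1 Stmt9Aux.f_int hb
    have h2 : Tendsto (fun N : ℕ => ∫ t in (1:ℝ)..(30*(N:ℝ)+1), (1 - A t) * t ^ (-(2:ℝ)))
        atTop (𝓝 (1 - Real.log 2 / 2 - Real.log 3 / 3 - Real.log 5 / 5 + Real.log 30 / 30)) := by
      apply Stmt9Aux.main_tendsto.congr
      intro N
      have := Stmt9Aux.integral_upto (30*N)
      push_cast at this
      rw [← this]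
    exact tendsto_nhds_unique h1 h2
  refine ⟨heq, ?_⟩
  rw [heq]
  have l2 : (0.6931471803:ℝ) < Real.log 2 := Real.log_two_gt_d9
  have l3 : (84:ℝ) * Real.log 2 < 53 * Real.log 3 := by
    have h := Real.log_lt_log (show (0:ℝ) < 2^84 by positivity)
      (show (2:ℝ)^84 < 3^53 by norm_num)
    rw [Real.log_pow, Real.log_pow] at h
    push_cast at h
    exact h
  have l5 : (65:ℝ) * Real.log 2 < 28 * Real.log 5 := by
    have h := Real.log_lt_log (show (0:ℝ) < 2^65 by positivity)
      (show (2:ℝ)^65 < 5^28 by norm_num)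
    rw [Real.log_pow, Real.log_pow] at h
    push_cast at h
    exact h
  have l30 : Real.log 30 = Real.log 2 + Real.log 3 + Real.log 5 := by
    rw [show (30:ℝ) = 2*3*5 by norm_num, Real.log_mul (by norm_num) (by norm_num),
      Real.log_mul (by norm_num) (by norm_num)]
  rw [l30]
  norm_num
  linarith
end

section
/- Assume Q(x) ≤ (6/π²)·x + 0.5·√x for all x ≥ 1 and Q(x) ≤ (6/π²)·x + 0.1333·√x for all x ≥ 1664, where Q(x) = Σ_{k ≤ x} μ²(k). Then for every real X ≥ 10^4, one has Σ_{k ≤ X} μ²(k)/√k ≤ (12/π²)·√X + 0.17·log X. -/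
open Finset Real ArithmeticFunction
open scoped ArithmeticFunction.Moebius

noncomputable def Q (x : ℝ) : ℝ := ∑ k ∈ Finset.Icc 1 ⌊x⌋₊, ((μ k : ℝ))^2

noncomputable def Qn (n : ℕ) : ℝ := ∑ j ∈ Finset.Icc 1 n, ((μ j : ℝ))^2

noncomputable def gfun (c : ℝ) (j : ℕ) : ℝ :=
  (6 / π^2) * Real.sqrt j + (c / 2) * Real.log j

lemma abel : ∀ n : ℕ, 1 ≤ n →
    ∑ k ∈ Finset.Icc 1 n, ((μ k : ℝ))^2 / Real.sqrt k
      = Qn n / Real.sqrt n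
        + ∑ k ∈ Finset.Ico 1 n, Qn k * (1 / Real.sqrt k - 1 / Real.sqrt (k + 1)) := by
  refine Nat.le_induction ?_ ?_
  · simp [Qn]
  · intro n hn ih
    rw [Finset.sum_Icc_succ_top (by omega), ih, Finset.sum_Ico_succ_top (by omega)]
    have hQ : Qn (n + 1) = Qn n + ((μ (n+1) : ℝ))^2 := by
      simpa [Qn] using Finset.sum_Icc_succ_top (a := 1) (b := n) (by omega)
        (fun j => ((μ j : ℝ))^2)
    rw [hQ]
    push_cast
    ring

lemma telescope (f : ℕ → ℝ) : ∀ a b : ℕ, a ≤ b →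
    ∑ k ∈ Finset.Ico a b, (f (k + 1) - f k) = f b - f a := by
  intro a
  refine Nat.le_induction ?_ ?_
  · simp
  · intro b hb ih
    rw [Finset.sum_Ico_succ_top hb, ih]; ring

lemma term_bound (k : ℕ) (hk : 1 ≤ k) (c : ℝ) (hc : 0 ≤ c)
    (hQ : Qn k ≤ (6 / π^2) * k + c * Real.sqrt k) :
    Qn k * (1 / Real.sqrt k - 1 / Real.sqrt (k + 1)) ≤ gfun c (k + 1) - gfun c k := by
  have hrhs : gfun c (k + 1) - gfun c k
      = (6 / π^2) * (Real.sqrt ((k:ℝ) + 1) - Real.sqrt k)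
        + (c / 2) * (Real.log ((k:ℝ) + 1) - Real.log k) := by
    simp only [gfun]; push_cast; ring
  rw [hrhs]
  set a := Real.sqrt k with hadef
  set b := Real.sqrt ((k:ℝ) + 1) with hbdef
  have hk1 : (1:ℝ) ≤ (k:ℝ) := by exact_mod_cast hk
  have ha1 : 1 ≤ a := by
    rw [hadef, show (1:ℝ) = Real.sqrt 1 by simp]
    exact Real.sqrt_le_sqrt hk1
  have ha0 : 0 < a := lt_of_lt_of_le one_pos ha1
  have hab : a ≤ b := Real.sqrt_le_sqrt (by linarith)
  have hb0 : 0 < b := lt_of_lt_of_le ha0 hab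
  have haa : a * a = k := Real.mul_self_sqrt (by linarith)
  have hbb : b * b = (k:ℝ) + 1 := Real.mul_self_sqrt (by linarith)
  have hd : 0 ≤ 1 / a - 1 / b := by
    have := one_div_le_one_div_of_le ha0 hab
    linarith
  have h2 : (k:ℝ) * (1 / a - 1 / b) ≤ b - a := by
    have hrw : 1 / a - 1 / b = (b - a) / (a * b) := by field_simp
    rw [hrw, mul_div_assoc', div_le_iff₀ (by positivity)]
    nlinarith [sq_nonneg (b - a)]
  have h3 : a * (1 / a - 1 / b) ≤ Real.log b - Real.log a := by
    have hrw : a * (1 / a - 1 / b) = 1 - a / b := by field_simp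
    have hlog : Real.log (a / b) ≤ a / b - 1 := Real.log_le_sub_one_of_pos (by positivity)
    have hdiv : Real.log (a / b) = Real.log a - Real.log b :=
      Real.log_div (ne_of_gt ha0) (ne_of_gt hb0)
    rw [hrw]; linarith
  have hlogs : Real.log b = Real.log ((k:ℝ) + 1) / 2 := Real.log_sqrt (by linarith)
  have hloga : Real.log a = Real.log (k:ℝ) / 2 := Real.log_sqrt (by linarith)
  have hpi : (0:ℝ) ≤ 6 / π^2 := by positivity
  calc Qn k * (1 / a - 1 / b)
      ≤ ((6 / π^2) * k + c * a) * (1 / a - 1 / b) := mul_le_mul_of_nonneg_right hQ hd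
    _ = (6 / π^2) * ((k:ℝ) * (1 / a - 1 / b)) + c * (a * (1 / a - 1 / b)) := by ring
    _ ≤ (6 / π^2) * (b - a) + c * (Real.log b - Real.log a) :=
        add_le_add (mul_le_mul_of_nonneg_left h2 hpi) (mul_le_mul_of_nonneg_left h3 hc)
    _ = (6 / π^2) * (b - a) + (c / 2) * (Real.log ((k:ℝ) + 1) - Real.log k) := by
        rw [hlogs, hloga]; ring


theorem stmt13
    (hQ1 : ∀ x : ℝ, 1 ≤ x → Q x ≤ (6 / π^2) * x + 0.5 * Real.sqrt x)
    (hQ2 : ∀ x : ℝ, 1664 ≤ x → Q x ≤ (6 / π^2) * x + 0.1333 * Real.sqrt x) :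
    ∀ X : ℝ, 10^4 ≤ X →
      (∑ k ∈ Finset.Icc 1 ⌊X⌋₊, ((μ k : ℝ))^2 / Real.sqrt k)
        ≤ (12 / π^2) * Real.sqrt X + 0.17 * Real.log X := by
  intro X hX
  have hX4 : (10000:ℝ) ≤ X := by norm_num at hX; linarith
  have hX0 : (0:ℝ) ≤ X := by linarith
  set n := ⌊X⌋₊ with hndef
  have hn4 : 10000 ≤ n := Nat.le_floor (by exact_mod_cast hX4)
  have hnX : (n:ℝ) ≤ X := Nat.floor_le hX0
  have hn0 : (0:ℝ) < (n:ℝ) := by exact_mod_cast Nat.lt_of_lt_of_le (by norm_num) hn4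
  have hQeq : ∀ k : ℕ, Q (k:ℝ) = Qn k := by
    intro k; simp [Q, Qn]
  rw [abel n (by omega)]
  -- split the Ico sum
  rw [← Finset.sum_Ico_consecutive
        (fun k => Qn k * (1 / Real.sqrt k - 1 / Real.sqrt (k + 1)))
        (show 1 ≤ 1664 by omega) (show 1664 ≤ n by omega)]
  -- bound first chunk
  have hsum1 : ∑ k ∈ Finset.Ico 1 1664, Qn k * (1 / Real.sqrt k - 1 / Real.sqrt (k + 1))
      ≤ gfun 0.5 1664 - gfun 0.5 1 := by
    rw [← telescope (gfun 0.5) 1 1664 (by omega)]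
    refine Finset.sum_le_sum ?_
    intro k hk
    rw [Finset.mem_Ico] at hk
    refine term_bound k hk.1 0.5 (by norm_num) ?_
    rw [← hQeq k]
    exact hQ1 (k:ℝ) (by exact_mod_cast hk.1)
  -- bound second chunk
  have hsum2 : ∑ k ∈ Finset.Ico 1664 n, Qn k * (1 / Real.sqrt k - 1 / Real.sqrt (k + 1))
      ≤ gfun 0.1333 n - gfun 0.1333 1664 := by
    rw [← telescope (gfun 0.1333) 1664 n (by omega)]
    refine Finset.sum_le_sum ?_
    intro k hk
    rw [Finset.mem_Ico] at hk
    refine term_bound k (by omega) 0.1333 (by norm_num) ?_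
    rw [← hQeq k]
    exact hQ2 (k:ℝ) (by exact_mod_cast hk.1)
  -- bound the head term
  have hsn : 0 < Real.sqrt n := Real.sqrt_pos.mpr hn0
  have hhead : Qn n / Real.sqrt n ≤ (6 / π^2) * Real.sqrt n + 0.1333 := by
    rw [div_le_iff₀ hsn]
    have hQn : Qn n ≤ (6 / π^2) * n + 0.1333 * Real.sqrt n := by
      rw [← hQeq n]
      exact hQ2 (n:ℝ) (by exact_mod_cast (by omega : 1664 ≤ n))
    have hs2 : Real.sqrt n * Real.sqrt n = (n:ℝ) := Real.mul_self_sqrt (le_of_lt hn0)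
    calc Qn n ≤ (6 / π^2) * n + 0.1333 * Real.sqrt n := hQn
      _ = ((6 / π^2) * Real.sqrt n + 0.1333) * Real.sqrt n := by
          linear_combination (-(6 / π^2)) * hs2
  -- numeric facts
  have hL : Real.log 1664 ≤ 7.4372 := by
    have e1 : (1664:ℝ) = 2^11 * (13/16) := by norm_num
    rw [e1, Real.log_mul (by norm_num) (by norm_num), Real.log_pow]
    have h2 := Real.log_two_lt_d9
    have h3 : Real.log (13/16 : ℝ) ≤ 13/16 - 1 := Real.log_le_sub_one_of_pos (by norm_num)
    push_cast
    linarith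
  have hLX : (9.1917:ℝ) ≤ Real.log X := by
    have hmono : Real.log 10000 ≤ Real.log X :=
      Real.log_le_log (by norm_num) hX4
    have e1 : (10000:ℝ) = 2^13 * (625/512) := by norm_num
    have h2 := Real.log_two_gt_d9
    have h3 : Real.log (512/625 : ℝ) ≤ 512/625 - 1 := Real.log_le_sub_one_of_pos (by norm_num)
    have hinv : Real.log (512/625 : ℝ) = -Real.log (625/512 : ℝ) := by
      rw [show (512/625:ℝ) = (625/512:ℝ)⁻¹ by norm_num, Real.log_inv]
    have e2 : Real.log (10000:ℝ) = 13 * Real.log 2 + Real.log (625/512 : ℝ) := by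
      rw [e1, Real.log_mul (by norm_num) (by norm_num), Real.log_pow]
      push_cast; ring
    rw [e2] at hmono
    linarith
  have hpi2 : (0.6079:ℝ) ≤ 6 / π^2 := by
    rw [le_div_iff₀ (by positivity)]
    nlinarith [Real.pi_lt_d6, Real.pi_pos]
  have hlogn : Real.log n ≤ Real.log X := Real.log_le_log hn0 hnX
  have hsqn : Real.sqrt n ≤ Real.sqrt X := Real.sqrt_le_sqrt hnX
  have hsq12 : 2 * (6 / π^2) * Real.sqrt n ≤ 2 * (6 / π^2) * Real.sqrt X :=
    mul_le_mul_of_nonneg_left hsqn (by positivity)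
  rw [show (12:ℝ) / π^2 = 2 * (6 / π^2) by ring]
  simp only [gfun, Nat.cast_one, Real.sqrt_one, Real.log_one, mul_one, mul_zero,
    add_zero] at hsum1 hsum2
  push_cast at hsum1 hsum2
  linarith
end
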